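/- Assume γ₂ > 0 and γ₁ ≠ γ₂. Define p(t) := B(t) − A(t)²/3, q(t) := 2A(t)³/27 − A(t)B(t)/3 + C(t), and the cubic discriminant Δ(t) := (p(t)/3)³ + (q(t)/2)². Then t·Δ(t) → −g·(γ₂d₂)⁴/27 as t → ∞; in particular there exists t₀ > 0 such that Δ(t) < 0 for all t ≥ t₀, and consequently for each t ≥ t₀ the cubic φ(t,·) has three distinct real roots. -/

import Mathlib

open Real Filter Asymptotics

/-- The coefficient `A(t)` of the dispersion cubic. -/
noncomputable def funA (d₁ d₂ γ₁ γ₂ t : ℝ) : ℝ :=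
  -(1 / t) * (γ₂ * (t * d₂ + Real.sinh (t * d₂) * Real.cosh (t * d₁) / Real.cosh (t * (d₁ + d₂)))
    + γ₁ * Real.sinh (t * d₁) * Real.cosh (t * d₂) / Real.cosh (t * (d₁ + d₂)))

/-- The coefficient `B(t)` of the dispersion cubic. -/
noncomputable def funB (d₁ d₂ g γ₁ γ₂ t : ℝ) : ℝ :=
  Real.tanh (t * (d₁ + d₂)) * ((γ₂ ^ 2 * d₂ - g) / t
    + γ₂ * (γ₁ - γ₂) * Real.sinh (t * d₁) * Real.sinh (t * d₂) /
        (t ^ 2 * Real.sinh (t * (d₁ + d₂))))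

/-- The coefficient `C(t)` of the dispersion cubic. -/
noncomputable def funC (d₁ d₂ g γ₁ γ₂ t : ℝ) : ℝ :=
  (g * Real.tanh (t * (d₁ + d₂)) / t ^ 2) *
    ((γ₁ - γ₂) * Real.sinh (t * d₁) * Real.sinh (t * d₂) / Real.sinh (t * (d₁ + d₂))
      + γ₂ * d₂ * t)

/-- The dispersion cubic `φ(t,Λ)`. -/
noncomputable def phi (d₁ d₂ g γ₁ γ₂ t Λ : ℝ) : ℝ :=
  Λ ^ 3 + funA d₁ d₂ γ₁ γ₂ t * Λ ^ 2 + funB d₁ d₂ g γ₁ γ₂ t * Λ + funC d₁ d₂ g γ₁ γ₂ t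

/-- The coefficient `p(t)` of the depressed cubic. -/
noncomputable def funp (d₁ d₂ g γ₁ γ₂ t : ℝ) : ℝ :=
  funB d₁ d₂ g γ₁ γ₂ t - (funA d₁ d₂ γ₁ γ₂ t) ^ 2 / 3

/-- The coefficient `q(t)` of the depressed cubic. -/
noncomputable def funq (d₁ d₂ g γ₁ γ₂ t : ℝ) : ℝ :=
  2 * (funA d₁ d₂ γ₁ γ₂ t) ^ 3 / 27 - funA d₁ d₂ γ₁ γ₂ t * funB d₁ d₂ g γ₁ γ₂ t / 3
    + funC d₁ d₂ g γ₁ γ₂ t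

/-- The discriminant `Δ(t)` of the depressed cubic. -/
noncomputable def disc (d₁ d₂ g γ₁ γ₂ t : ℝ) : ℝ :=
  (funp d₁ d₂ g γ₁ γ₂ t / 3) ^ 3 + (funq d₁ d₂ g γ₁ γ₂ t / 2) ^ 2

lemma aux_exp0 {k : ℝ} (hk : 0 < k) :
    Tendsto (fun t : ℝ => 2 * Real.exp (-(k * t))) atTop (nhds 0) := by
  have h1 : Tendsto (fun t : ℝ => k * t) atTop atTop :=
    Tendsto.const_mul_atTop hk tendsto_id
  have h2 : Tendsto (fun t : ℝ => Real.exp (-(k * t))) atTop (nhds 0) :=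
    Real.tendsto_exp_neg_atTop_nhds_zero.comp h1
  simpa using h2.const_mul 2

lemma aux_cosh_ratio {c d : ℝ} (h : |c| < d) :
    Tendsto (fun t : ℝ => Real.cosh (t * c) / Real.cosh (t * d)) atTop (nhds 0) := by
  have hk : 0 < d - |c| := by linarith
  refine squeeze_zero_norm' ?_ (aux_exp0 hk)
  filter_upwards [eventually_ge_atTop (0:ℝ)] with t ht
  have hcd : 0 < Real.cosh (t * d) := (Real.cosh_pos _)
  have h1 : Real.cosh (t * c) ≤ Real.exp (|t * c|) := by
    rw [Real.cosh_eq]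
    have := Real.exp_le_exp.2 (le_abs_self (t*c))
    have := Real.exp_le_exp.2 (neg_le_abs (t*c))
    linarith
  have h2 : Real.exp (t * d) / 2 ≤ Real.cosh (t * d) := by
    rw [Real.cosh_eq]
    have := Real.exp_pos (-(t*d))
    linarith
  rw [Real.norm_eq_abs, abs_div, abs_of_pos hcd, abs_of_pos (Real.cosh_pos _)]
  rw [div_le_iff₀ hcd]
  have habs : |t * c| = t * |c| := by rw [abs_mul, abs_of_nonneg ht]
  calc Real.cosh (t * c) ≤ Real.exp (t * |c|) := by rwa [habs] at h1
    _ = 2 * Real.exp (-((d - |c|) * t)) * (Real.exp (t * d) / 2) := by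
        rw [show 2 * Real.exp (-((d - |c|) * t)) * (Real.exp (t * d) / 2)
              = Real.exp (-((d - |c|) * t)) * Real.exp (t * d) by ring, ← Real.exp_add]
        ring_nf
    _ ≤ 2 * Real.exp (-((d - |c|) * t)) * Real.cosh (t * d) := by
        have : 0 < 2 * Real.exp (-((d - |c|) * t)) := by positivity
        nlinarith

lemma aux_abs_sinh_le_cosh (x : ℝ) : |Real.sinh x| ≤ Real.cosh x := by
  rw [abs_le]
  constructor <;> rw [Real.sinh_eq, Real.cosh_eq] <;>
    [have := Real.exp_pos x; have := Real.exp_pos (-x)] <;> linarith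

lemma aux_sinh_ratio {c d : ℝ} (h : |c| < d) :
    Tendsto (fun t : ℝ => Real.sinh (t * c) / Real.cosh (t * d)) atTop (nhds 0) := by
  have hg : Tendsto (fun t : ℝ => Real.cosh (t * c) / Real.cosh (t * d)) atTop (nhds 0) :=
    aux_cosh_ratio h
  refine squeeze_zero_norm (fun t => ?_) hg
  have hcd : 0 < Real.cosh (t * d) := Real.cosh_pos _
  rw [Real.norm_eq_abs, abs_div, abs_of_pos hcd]
  gcongr
  exact aux_abs_sinh_le_cosh _

lemma aux_tanh {d : ℝ} (hd : 0 < d) :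
    Tendsto (fun t : ℝ => Real.tanh (t * d)) atTop (nhds 1) := by
  have key : Tendsto (fun t : ℝ => Real.exp (-(t * d)) / Real.cosh (t * d)) atTop (nhds 0) := by
    refine squeeze_zero (fun t => by positivity) (fun t => ?_)
      (by simpa using aux_exp0 (k := 2 * d) (by linarith))
    have hcd : 0 < Real.cosh (t * d) := Real.cosh_pos _
    rw [div_le_iff₀ hcd]
    have h2 : Real.exp (t * d) / 2 ≤ Real.cosh (t * d) := by
      rw [Real.cosh_eq]; have := Real.exp_pos (-(t*d)); linarith
    calc Real.exp (-(t * d)) = 2 * Real.exp (-(2 * d * t)) * (Real.exp (t * d) / 2) := by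
          rw [show 2 * Real.exp (-(2 * d * t)) * (Real.exp (t * d) / 2)
                = Real.exp (-(2 * d * t)) * Real.exp (t * d) by ring, ← Real.exp_add]
          ring_nf
      _ ≤ 2 * Real.exp (-(2 * d * t)) * Real.cosh (t * d) := by
          have : 0 < 2 * Real.exp (-(2 * d * t)) := by positivity
          nlinarith
  have heq : ∀ t : ℝ, Real.tanh (t * d) = 1 - Real.exp (-(t * d)) / Real.cosh (t * d) := by
    intro t
    have hcd : Real.cosh (t * d) ≠ 0 := (Real.cosh_pos _).ne'
    rw [Real.tanh_eq_sinh_div_cosh, ← Real.cosh_sub_sinh]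
    field_simp
    rw [Real.sinh_eq, Real.cosh_eq]; ring
  simpa [heq] using (tendsto_const_nhds.sub key : Tendsto (fun t : ℝ =>
    1 - Real.exp (-(t * d)) / Real.cosh (t * d)) atTop (nhds (1 - 0)))

lemma aux_V {d₁ d₂ : ℝ} (h1 : 0 < d₁) (h2 : 0 < d₂) :
    Tendsto (fun t : ℝ => Real.sinh (t * d₁) * Real.cosh (t * d₂) / Real.cosh (t * (d₁ + d₂)))
      atTop (nhds (1/2)) := by
  have hc : |d₁ - d₂| < d₁ + d₂ := abs_lt.2 ⟨by linarith, by linarith⟩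
  have key : ∀ t : ℝ, Real.sinh (t * d₁) * Real.cosh (t * d₂) / Real.cosh (t * (d₁ + d₂))
      = (Real.tanh (t * (d₁ + d₂)) + Real.sinh (t * (d₁ - d₂)) / Real.cosh (t * (d₁ + d₂))) / 2 := by
    intro t
    have hcd : Real.cosh (t * (d₁ + d₂)) ≠ 0 := (Real.cosh_pos _).ne'
    rw [Real.tanh_eq_sinh_div_cosh]
    field_simp
    rw [show t * (d₁ + d₂) = t * d₁ + t * d₂ by ring, show t * (d₁ - d₂) = t * d₁ - t * d₂ by ring,
      Real.sinh_add, Real.sinh_sub]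
    ring
  simp only [key]
  simpa using ((aux_tanh (by linarith : (0:ℝ) < d₁ + d₂)).add (aux_sinh_ratio hc)).div_const 2

lemma aux_U {d₁ d₂ : ℝ} (h1 : 0 < d₁) (h2 : 0 < d₂) :
    Tendsto (fun t : ℝ => Real.sinh (t * d₂) * Real.cosh (t * d₁) / Real.cosh (t * (d₁ + d₂)))
      atTop (nhds (1/2)) := by
  have hc : |d₁ - d₂| < d₁ + d₂ := abs_lt.2 ⟨by linarith, by linarith⟩
  have key : ∀ t : ℝ, Real.sinh (t * d₂) * Real.cosh (t * d₁) / Real.cosh (t * (d₁ + d₂))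
      = (Real.tanh (t * (d₁ + d₂)) - Real.sinh (t * (d₁ - d₂)) / Real.cosh (t * (d₁ + d₂))) / 2 := by
    intro t
    have hcd : Real.cosh (t * (d₁ + d₂)) ≠ 0 := (Real.cosh_pos _).ne'
    rw [Real.tanh_eq_sinh_div_cosh]
    field_simp
    rw [show t * (d₁ + d₂) = t * d₁ + t * d₂ by ring, show t * (d₁ - d₂) = t * d₁ - t * d₂ by ring,
      Real.sinh_add, Real.sinh_sub]
    ring
  simp only [key]
  simpa using ((aux_tanh (by linarith : (0:ℝ) < d₁ + d₂)).sub (aux_sinh_ratio hc)).div_const 2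

lemma aux_S {d₁ d₂ : ℝ} (h1 : 0 < d₁) (h2 : 0 < d₂) :
    Tendsto (fun t : ℝ => Real.sinh (t * d₁) * Real.sinh (t * d₂) / Real.sinh (t * (d₁ + d₂)))
      atTop (nhds (1/2)) := by
  have hd : (0:ℝ) < d₁ + d₂ := by linarith
  have hc : |d₁ - d₂| < d₁ + d₂ := abs_lt.2 ⟨by linarith, by linarith⟩
  have hlim : Tendsto (fun t : ℝ =>
      (1 - Real.cosh (t * (d₁ - d₂)) / Real.cosh (t * (d₁ + d₂))) / (2 * Real.tanh (t * (d₁ + d₂))))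
      atTop (nhds (1/2)) := by
    have := ((tendsto_const_nhds (α := ℝ) (x := (1:ℝ))).sub (aux_cosh_ratio hc)).div
      ((aux_tanh hd).const_mul 2) (by norm_num)
    simpa [Pi.div_def] using this
  refine Tendsto.congr' ?_ hlim
  filter_upwards [eventually_ge_atTop (1:ℝ)] with t ht
  have htpos : 0 < t := lt_of_lt_of_le one_pos ht
  have hsd : Real.sinh (t * (d₁ + d₂)) ≠ 0 := by
    have : 0 < Real.sinh (t * (d₁ + d₂)) := by
      rw [show (0:ℝ) = Real.sinh 0 by simp]
      exact Real.sinh_lt_sinh.2 (by positivity)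
    exact this.ne'
  have hcd : Real.cosh (t * (d₁ + d₂)) ≠ 0 := (Real.cosh_pos _).ne'
  rw [Real.tanh_eq_sinh_div_cosh]
  field_simp
  rw [show t * (d₁ + d₂) = t * d₁ + t * d₂ by ring, show t * (d₁ - d₂) = t * d₁ - t * d₂ by ring,
    Real.cosh_add, Real.cosh_sub]
  ring

lemma aux_cubic_factor (A B C x y z : ℝ) (hxy : x < y) (hyz : y < z)
    (hx : x^3 + A*x^2 + B*x + C = 0) (hy : y^3 + A*y^2 + B*y + C = 0)
    (hz : z^3 + A*z^2 + B*z + C = 0) :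
    ∀ Λ : ℝ, Λ^3 + A*Λ^2 + B*Λ + C = (Λ - x) * (Λ - y) * (Λ - z) := by
  have hxy' : x - y ≠ 0 := sub_ne_zero.2 hxy.ne
  have hyz' : y - z ≠ 0 := sub_ne_zero.2 hyz.ne
  have hxz' : x - z ≠ 0 := sub_ne_zero.2 (hxy.trans hyz).ne
  have e1 : x^2 + x*y + y^2 + A*(x+y) + B = 0 := by
    have h := mul_left_cancel₀ hxy' (b := x^2 + x*y + y^2 + A*(x+y) + B) (c := 0) ?_
    · exact h
    · rw [mul_zero]; linear_combination hx - hy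
  have e2 : y^2 + y*z + z^2 + A*(y+z) + B = 0 := by
    have h := mul_left_cancel₀ hyz' (b := y^2 + y*z + z^2 + A*(y+z) + B) (c := 0) ?_
    · exact h
    · rw [mul_zero]; linear_combination hy - hz
  have eA : x + y + z + A = 0 := by
    have h := mul_left_cancel₀ hxz' (b := x + y + z + A) (c := 0) ?_
    · exact h
    · rw [mul_zero]; linear_combination e1 - e2
  have eB : B = x*y + y*z + z*x := by linear_combination e1 - (x + y) * eA
  have eC : C = -(x*y*z) := by linear_combination hx - x^2 * eA - x * eB
  intro Λ
  linear_combination Λ^2 * eA + Λ * eB + eC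

lemma aux_depressed_roots (p q : ℝ) (h : (p/3)^3 + (q/2)^2 < 0) :
    ∃ x y z : ℝ, x < y ∧ y < z ∧ x^3 + p*x + q = 0 ∧ y^3 + p*y + q = 0 ∧ z^3 + p*z + q = 0 := by
  set f : ℝ → ℝ := fun w => w^3 + p*w + q with hf
  have hcont : Continuous f := by fun_prop
  have hp : p < 0 := by nlinarith [sq_nonneg (q/2), sq_nonneg p]
  set s : ℝ := Real.sqrt (-p/3) with hs
  have hs2 : s^2 = -p/3 := Real.sq_sqrt (by linarith)
  have hspos : 0 < s := Real.sqrt_pos.2 (by linarith)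
  have hfs : f s = q + 2*p*s/3 := by
    simp only [hf]
    have : s^3 = s^2 * s := by ring
    rw [this, hs2]; ring
  have hfns : f (-s) = q - 2*p*s/3 := by
    simp only [hf]
    have : (-s)^3 = -(s^2 * s) := by ring
    rw [this, hs2]; ring
  have hprod : f (-s) * f s < 0 := by
    rw [hfs, hfns]
    have : (q - 2*p*s/3) * (q + 2*p*s/3) = q^2 - 4*p^2*s^2/9 := by ring
    rw [this, hs2]
    nlinarith
  have hdiff : f s < f (-s) := by
    rw [hfs, hfns]; nlinarith [mul_pos (neg_pos.2 hp) hspos]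
  have hfs_neg : f s < 0 := by by_contra hc; push_neg at hc; nlinarith
  have hfns_pos : 0 < f (-s) := by nlinarith
  set T : ℝ := s + |p| + |q| + 1 with hT
  have hT1 : 1 ≤ T := by
    have := abs_nonneg p; have := abs_nonneg q; simp only [hT]; linarith
  have hTs : s < T := by
    have := abs_nonneg p; have := abs_nonneg q; simp only [hT]; linarith
  have hfT : 0 < f T := by
    simp only [hf]
    have h1 : |p| * T + |q| < T^3 := by
      nlinarith [abs_nonneg p, abs_nonneg q, hspos.le, sq_nonneg T]
    have h2 : -(|p| * T) ≤ p * T := by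
      have := neg_abs_le p; nlinarith
    have h3 : -|q| ≤ q := neg_abs_le q
    linarith
  have hfnT : f (-T) < 0 := by
    simp only [hf]
    have h1 : |p| * T + |q| < T^3 := by
      nlinarith [abs_nonneg p, abs_nonneg q, hspos.le, sq_nonneg T]
    have h2 : -(p * T) ≤ |p| * T := by
      have := le_abs_self (-p); nlinarith [abs_neg p]
    have h3 : q ≤ |q| := le_abs_self q
    nlinarith
  -- root in (-T, -s)
  obtain ⟨x, hxmem, hxr⟩ : ∃ x ∈ Set.Ioo (-T) (-s), f x = 0 := by
    have := intermediate_value_Ioo (by linarith : -T ≤ -s) hcont.continuousOn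
    obtain ⟨x, hx, hfx⟩ := this ⟨hfnT, hfns_pos⟩
    exact ⟨x, hx, hfx⟩
  obtain ⟨y, hymem, hyr⟩ : ∃ y ∈ Set.Ioo (-s) s, f y = 0 := by
    have := intermediate_value_Ioo' (by linarith : -s ≤ s) hcont.continuousOn
    obtain ⟨y, hy, hfy⟩ := this ⟨hfs_neg, hfns_pos⟩
    exact ⟨y, hy, hfy⟩
  obtain ⟨z, hzmem, hzr⟩ : ∃ z ∈ Set.Ioo s T, f z = 0 := by
    have := intermediate_value_Ioo (by linarith : s ≤ T) hcont.continuousOn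
    obtain ⟨z, hz, hfz⟩ := this ⟨hfs_neg, hfT⟩
    exact ⟨z, hz, hfz⟩
  exact ⟨x, y, z, hxmem.2.trans_le hymem.1.le |>.trans_le le_rfl |>.trans_le le_rfl
    |>.trans_le le_rfl, hymem.2.trans_le hzmem.1.le |>.trans_le le_rfl, hxr, hyr, hzr⟩

noncomputable def auxP (m a b e : ℝ) : ℝ := b + 2*m*a/3 - a^2*e/3
noncomputable def auxQ (m a b c e : ℝ) : ℝ :=
  2*m^2*a/9 + m*b/3 + c - e*(2*m*a^2/9 + a*b/3) + 2*a^3*e^2/27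
noncomputable def auxG (m : ℝ) (v : ℝ × ℝ × ℝ × ℝ) : ℝ :=
  m^4 * auxP m v.1 v.2.1 v.2.2.2 / 81 - m^3 * auxQ m v.1 v.2.1 v.2.2.1 v.2.2.2 / 27
    + v.2.2.2 * ((auxQ m v.1 v.2.1 v.2.2.1 v.2.2.2)^2/4 - m^2*(auxP m v.1 v.2.1 v.2.2.2)^2/27)
    + v.2.2.2^2 * (auxP m v.1 v.2.1 v.2.2.2)^3/27

lemma auxG_continuous (m : ℝ) : Continuous (auxG m) := by
  unfold auxG auxP auxQ; fun_prop

lemma aux_identity (m x y z t : ℝ) (ht : t ≠ 0) :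
    t * ((((y*t⁻¹) - (-m + x*t⁻¹)^2/3)/3)^3
      + ((2*(-m + x*t⁻¹)^3/27 - (-m + x*t⁻¹)*(y*t⁻¹)/3 + z*t⁻¹)/2)^2)
    = auxG m (x, y, z, t⁻¹) := by
  simp only [auxG, auxP, auxQ]
  field_simp
  ring
noncomputable def funAlpha (d₁ d₂ γ₁ γ₂ t : ℝ) : ℝ :=
  -(γ₂ * (Real.sinh (t * d₂) * Real.cosh (t * d₁) / Real.cosh (t * (d₁ + d₂)))
    + γ₁ * (Real.sinh (t * d₁) * Real.cosh (t * d₂) / Real.cosh (t * (d₁ + d₂))))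
noncomputable def funBeta (d₁ d₂ g γ₁ γ₂ t : ℝ) : ℝ :=
  Real.tanh (t * (d₁ + d₂)) * ((γ₂ ^ 2 * d₂ - g)
    + γ₂ * (γ₁ - γ₂) * (Real.sinh (t * d₁) * Real.sinh (t * d₂) / Real.sinh (t * (d₁ + d₂))) * t⁻¹)
noncomputable def funGamma (d₁ d₂ g γ₁ γ₂ t : ℝ) : ℝ :=
  g * Real.tanh (t * (d₁ + d₂)) * (γ₂ * d₂
    + (γ₁ - γ₂) * (Real.sinh (t * d₁) * Real.sinh (t * d₂) / Real.sinh (t * (d₁ + d₂))) * t⁻¹)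

section
variable {d₁ d₂ g γ₁ γ₂ : ℝ}

lemma hA_eq (hd₁ : 0 < d₁) (hd₂ : 0 < d₂) {t : ℝ} (ht : t ≠ 0) :
    funA d₁ d₂ γ₁ γ₂ t = -(γ₂ * d₂) + funAlpha d₁ d₂ γ₁ γ₂ t * t⁻¹ := by
  have hc : Real.cosh (t * (d₁ + d₂)) ≠ 0 := (Real.cosh_pos _).ne'
  simp only [funA, funAlpha]
  field_simp
  ring

lemma hB_eq (hd₁ : 0 < d₁) (hd₂ : 0 < d₂) {t : ℝ} (ht : t ≠ 0) :
    funB d₁ d₂ g γ₁ γ₂ t = funBeta d₁ d₂ g γ₁ γ₂ t * t⁻¹ := by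
  have hs : Real.sinh (t * (d₁ + d₂)) ≠ 0 := by
    rw [Real.sinh_ne_zero]
    exact mul_ne_zero ht (by linarith)
  simp only [funB, funBeta]
  field_simp

lemma hC_eq (hd₁ : 0 < d₁) (hd₂ : 0 < d₂) {t : ℝ} (ht : t ≠ 0) :
    funC d₁ d₂ g γ₁ γ₂ t = funGamma d₁ d₂ g γ₁ γ₂ t * t⁻¹ := by
  have hs : Real.sinh (t * (d₁ + d₂)) ≠ 0 := by
    rw [Real.sinh_ne_zero]
    exact mul_ne_zero ht (by linarith)
  simp only [funC, funGamma]
  field_simp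
  ring

end

section
variable {d₁ d₂ g γ₁ γ₂ : ℝ}

lemma main_tendsto (hd₁ : 0 < d₁) (hd₂ : 0 < d₂) :
    Filter.Tendsto (fun t : ℝ => t * disc d₁ d₂ g γ₁ γ₂ t) atTop
      (nhds (-(g * (γ₂ * d₂) ^ 4) / 27)) := by
  have hd : (0:ℝ) < d₁ + d₂ := by linarith
  have hα : Tendsto (funAlpha d₁ d₂ γ₁ γ₂) atTop
      (nhds (-(γ₂ * (1/2) + γ₁ * (1/2)))) := by
    unfold funAlpha
    exact (((aux_U hd₁ hd₂).const_mul γ₂).add ((aux_V hd₁ hd₂).const_mul γ₁)).neg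
  have hβ : Tendsto (funBeta d₁ d₂ g γ₁ γ₂) atTop
      (nhds (1 * ((γ₂ ^ 2 * d₂ - g) + γ₂ * (γ₁ - γ₂) * (1/2) * 0))) := by
    unfold funBeta
    exact (aux_tanh hd).mul (tendsto_const_nhds.add
      (((aux_S hd₁ hd₂).const_mul (γ₂ * (γ₁ - γ₂))).mul tendsto_inv_atTop_zero))
  have hγ : Tendsto (funGamma d₁ d₂ g γ₁ γ₂) atTop
      (nhds (g * 1 * (γ₂ * d₂ + (γ₁ - γ₂) * (1/2) * 0))) := by
    unfold funGamma
    exact ((aux_tanh hd).const_mul g).mul (tendsto_const_nhds.add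
      (((aux_S hd₁ hd₂).const_mul (γ₁ - γ₂)).mul tendsto_inv_atTop_zero))
  have hprod : Tendsto (fun t : ℝ => (funAlpha d₁ d₂ γ₁ γ₂ t, funBeta d₁ d₂ g γ₁ γ₂ t,
      funGamma d₁ d₂ g γ₁ γ₂ t, t⁻¹)) atTop
      (nhds (-(γ₂ * (1/2) + γ₁ * (1/2)), 1 * ((γ₂ ^ 2 * d₂ - g) + γ₂ * (γ₁ - γ₂) * (1/2) * 0),
        g * 1 * (γ₂ * d₂ + (γ₁ - γ₂) * (1/2) * 0), 0)) :=
    hα.prodMk_nhds (hβ.prodMk_nhds (hγ.prodMk_nhds tendsto_inv_atTop_zero))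
  have hcomp := ((auxG_continuous (γ₂ * d₂)).tendsto _).comp hprod
  have hval : auxG (γ₂ * d₂) (-(γ₂ * (1/2) + γ₁ * (1/2)),
      1 * ((γ₂ ^ 2 * d₂ - g) + γ₂ * (γ₁ - γ₂) * (1/2) * 0),
      g * 1 * (γ₂ * d₂ + (γ₁ - γ₂) * (1/2) * 0), 0) = -(g * (γ₂ * d₂) ^ 4) / 27 := by
    simp only [auxG, auxP, auxQ]
    norm_num
    ring
  rw [hval] at hcomp
  refine Tendsto.congr' ?_ hcomp
  filter_upwards [eventually_ge_atTop (1:ℝ)] with t ht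
  have ht0 : t ≠ 0 := by positivity
  simp only [Function.comp]
  rw [disc, funp, funq, hA_eq hd₁ hd₂ ht0, hB_eq hd₁ hd₂ ht0, hC_eq hd₁ hd₂ ht0]
  exact (aux_identity (γ₂ * d₂) (funAlpha d₁ d₂ γ₁ γ₂ t) (funBeta d₁ d₂ g γ₁ γ₂ t)
    (funGamma d₁ d₂ g γ₁ γ₂ t) t ht0).symm

end

/-- for `γ₂ > 0`, `γ₁ ≠ γ₂`, the discriminant satisfies
`t·Δ(t) → −g(γ₂d₂)⁴/27`; in particular it is eventually negative and the
dispersion cubic has three distinct real roots. -/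
theorem discriminant_negative_three_roots
    (d₁ d₂ g γ₁ γ₂ : ℝ) (hd₁ : 0 < d₁) (hd₂ : 0 < d₂) (hg : 0 < g)
    (hγ₂ : 0 < γ₂) (hne : γ₁ ≠ γ₂) :
    Tendsto (fun t : ℝ => t * disc d₁ d₂ g γ₁ γ₂ t) atTop
      (nhds (-(g * (γ₂ * d₂) ^ 4) / 27)) ∧
    ∃ t₀ > (0 : ℝ), ∀ t ≥ t₀,
      disc d₁ d₂ g γ₁ γ₂ t < 0 ∧
      ∃ x y z : ℝ, x < y ∧ y < z ∧
        ∀ Λ : ℝ, phi d₁ d₂ g γ₁ γ₂ t Λ = (Λ - x) * (Λ - y) * (Λ - z) := by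
  have hmain := main_tendsto (g := g) (γ₁ := γ₁) (γ₂ := γ₂) hd₁ hd₂
  refine ⟨hmain, ?_⟩
  have hL : -(g * (γ₂ * d₂) ^ 4) / 27 < 0 := by
    have : 0 < g * (γ₂ * d₂) ^ 4 := by positivity
    linarith
  have hev : ∀ᶠ t in atTop, t * disc d₁ d₂ g γ₁ γ₂ t < 0 :=
    hmain.eventually_lt_const hL
  obtain ⟨N, hN⟩ := (hev.and (eventually_ge_atTop (1:ℝ))).exists_forall_of_atTop
  refine ⟨max N 1, lt_of_lt_of_le one_pos (le_max_right _ _), fun t htt => ?_⟩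
  have ht1 : 1 ≤ t := le_trans (le_max_right _ _) htt
  have htpos : 0 < t := lt_of_lt_of_le one_pos ht1
  obtain ⟨hneg, -⟩ := hN t (le_trans (le_max_left _ _) htt)
  have hdisc : disc d₁ d₂ g γ₁ γ₂ t < 0 := by nlinarith
  refine ⟨hdisc, ?_⟩
  have hdep : (funp d₁ d₂ g γ₁ γ₂ t / 3) ^ 3 + (funq d₁ d₂ g γ₁ γ₂ t / 2) ^ 2 < 0 := hdisc
  obtain ⟨x, y, z, hxy, hyz, hx, hy, hz⟩ :=
    aux_depressed_roots (funp d₁ d₂ g γ₁ γ₂ t) (funq d₁ d₂ g γ₁ γ₂ t) hdep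
  set A := funA d₁ d₂ γ₁ γ₂ t
  set B := funB d₁ d₂ g γ₁ γ₂ t
  set C := funC d₁ d₂ g γ₁ γ₂ t
  have hshift : ∀ w : ℝ, (w - A/3)^3 + A*(w - A/3)^2 + B*(w - A/3) + C
      = w^3 + funp d₁ d₂ g γ₁ γ₂ t * w + funq d₁ d₂ g γ₁ γ₂ t := by
    intro w
    simp only [funp, funq]
    ring
  have hfac := aux_cubic_factor A B C (x - A/3) (y - A/3) (z - A/3)
    (by linarith) (by linarith)
    (by rw [hshift x]; exact hx) (by rw [hshift y]; exact hy) (by rw [hshift z]; exact hz)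
  exact ⟨x - A/3, y - A/3, z - A/3, by linarith, by linarith, fun Λ => hfac Λ⟩
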